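/- Let K be a field, M a finite J-trivial monoid, and x ∈ M. Suppose x = u·v is a non-trivial factorization of x, i.e., lfix(x)·u ≠ lfix(x) and v·rfix(x) ≠ rfix(x). Then, in MonoidAlgebra K M, the element (u − u^ω)·(v − v^ω) − x lies in the K-span of {y ∈ M : y <_J x}; equivalently, (u − u^ω)(v − v^ω) = x + Σ_{y <_J x} c_y y for some scalars c_y ∈ K. -/
import Mathlib


/-- The `J`-preorder on a monoid: `x ≤_J y` iff `x = u * y * v` for some `u, v`. -/
def leJ {M : Type*} [Monoid M] (x y : M) : Prop := ∃ u v : M, x = u * y * v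

/-- A monoid is `J`-trivial if `M x M = M y M` implies `x = y`. -/
def JTrivial (M : Type*) [Monoid M] : Prop :=
  ∀ x y : M, {z : M | ∃ u v : M, z = u * x * v} = {z : M | ∃ u v : M, z = u * y * v} → x = y

open Classical

/-- `x ^ ω`: the unique idempotent among the positive powers of `x`
(in a finite `J`-trivial monoid it exists and is unique). -/
noncomputable def omegaPow {M : Type*} [Monoid M] (x : M) : M :=
  if h : ∃ e : M, IsIdempotentElem e ∧ ∃ n : ℕ, 0 < n ∧ e = x ^ n then h.choose else 1

/-- `lfix x`: the `≤_J`-minimum of the idempotents `e` with `e * x = x`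
(it exists in a finite `J`-trivial monoid). -/
noncomputable def lfixF {M : Type*} [Monoid M] (x : M) : M :=
  if h : ∃ e : M, (IsIdempotentElem e ∧ e * x = x) ∧
      ∀ f : M, IsIdempotentElem f → f * x = x → leJ e f
  then h.choose else 1

/-- `rfix x`: the `≤_J`-minimum of the idempotents `e` with `x * e = x`
(it exists in a finite `J`-trivial monoid). -/
noncomputable def rfixF {M : Type*} [Monoid M] (x : M) : M :=
  if h : ∃ e : M, (IsIdempotentElem e ∧ x * e = x) ∧
      ∀ f : M, IsIdempotentElem f → x * f = x → leJ e f
  then h.choose else 1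


section Aux
variable {M : Type*} [Monoid M]

lemma leJ_refl (x : M) : leJ x x := ⟨1, 1, by simp⟩

lemma leJ_trans {a b c : M} (h1 : leJ a b) (h2 : leJ b c) : leJ a c := by
  obtain ⟨p, q, hpq⟩ := h1
  obtain ⟨r, s, hrs⟩ := h2
  exact ⟨p * r, s * q, by rw [hpq, hrs]; simp [mul_assoc]⟩

lemma leJ_antisymm (hJ : JTrivial M) {a b : M} (h1 : leJ a b) (h2 : leJ b a) : a = b := by
  apply hJ
  ext z
  simp only [Set.mem_setOf_eq]
  constructor
  · rintro ⟨c, d, rfl⟩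
    obtain ⟨p, q, hp⟩ := h1
    exact ⟨c * p, q * d, by rw [hp]; simp [mul_assoc]⟩
  · rintro ⟨c, d, rfl⟩
    obtain ⟨p, q, hp⟩ := h2
    exact ⟨c * p, q * d, by rw [hp]; simp [mul_assoc]⟩

lemma exists_idem_pow [Finite M] (x : M) : ∃ n : ℕ, 0 < n ∧ IsIdempotentElem (x ^ n) := by
  obtain ⟨a, b, hab, h⟩ := Finite.exists_ne_map_eq_of_infinite (fun n : ℕ => x ^ n)
  wlog hlt : a < b generalizing a b
  · exact this b a hab.symm h.symm (by omega)
  set d := b - a with hd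
  have hdpos : 0 < d := by omega
  have hstep : ∀ s : ℕ, x ^ (a + s + d) = x ^ (a + s) := by
    intro s
    have : a + s + d = b + s := by omega
    rw [this, pow_add, pow_add, ← h]
  have key : ∀ k s : ℕ, x ^ (a + s + k * d) = x ^ (a + s) := by
    intro k
    induction k with
    | zero => simp
    | succ k ih =>
      intro s
      have : a + s + (k + 1) * d = a + (s + k * d) + d := by ring
      rw [this, hstep (s + k * d), ← add_assoc, ih s]
  refine ⟨(a + 1) * d, by positivity, ?_⟩
  unfold IsIdempotentElem
  rw [← pow_add]
  have h1 : (a + 1) * d + (a + 1) * d = a + ((a + 1) * d - a) + (a + 1) * d := by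
    have : a ≤ (a + 1) * d := by nlinarith
    omega
  have h2 : (a + 1) * d = a + ((a + 1) * d - a) := by
    have : a ≤ (a + 1) * d := by nlinarith
    omega
  rw [h1, key (a + 1) ((a + 1) * d - a), ← h2]

/-- absorption: if `e ≤_J f` for idempotents, then `f*e = e` and `e*f = e`. -/
lemma idem_absorb (hJ : JTrivial M) {e f : M} (he : IsIdempotentElem e)
    (hf : IsIdempotentElem f) (hef : leJ e f) : f * e = e ∧ e * f = e := by
  obtain ⟨a, b, hab⟩ := hef
  have h1 : e = a * (f * b * e) := by
    nth_rewrite 1 [← he]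
    nth_rewrite 1 [hab]
    simp [mul_assoc]
  have hfbe : f * b * e = e := by
    apply leJ_antisymm hJ
    · exact ⟨f * b, 1, by simp [mul_assoc]⟩
    · exact ⟨a, 1, by rw [mul_one]; exact h1⟩
  have h2 : e = (e * a * f) * b := by
    nth_rewrite 1 [← he]
    nth_rewrite 2 [hab]
    simp [mul_assoc]
  have heaf : e * a * f = e := by
    apply leJ_antisymm hJ
    · exact ⟨1, a * f, by simp [mul_assoc]⟩
    · exact ⟨1, b, by rw [one_mul]; exact h2⟩
  constructor
  · rw [← hfbe, ← mul_assoc, ← mul_assoc, hf]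
  · rw [← heaf]
    rw [mul_assoc, mul_assoc, hf, ← mul_assoc]

lemma pow_absorb (hJ : JTrivial M) (x : M) {n : ℕ} (hn : 0 < n)
    (h : IsIdempotentElem (x ^ n)) : x * x ^ n = x ^ n ∧ x ^ n * x = x ^ n := by
  have hs : x ^ (n + 1) = x ^ n := by
    apply leJ_antisymm hJ
    · exact ⟨1, x, by rw [one_mul, pow_succ]⟩
    · refine ⟨x ^ (n - 1), 1, ?_⟩
      rw [mul_one, ← pow_add]
      have : n - 1 + (n + 1) = n + n := by omega
      rw [this, pow_add, h]
  constructor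
  · rw [← pow_succ']; exact hs
  · rw [← pow_succ]; exact hs

lemma exists_min (hJ : JTrivial M) [Fintype M] (P : M → Prop) (hP1 : P 1)
    (meet : ∀ e f, P e → P f → ∃ g, P g ∧ leJ g e ∧ leJ g f) :
    ∃ e, P e ∧ ∀ f, P f → leJ e f := by
  have key : ∀ s : Finset M, ∃ e, P e ∧ ∀ f ∈ s, P f → leJ e f := by
    intro s
    induction s using Finset.induction_on with
    | empty => exact ⟨1, hP1, by simp⟩
    | @insert a s ha ih =>
      obtain ⟨e, hPe, he⟩ := ih
      by_cases hPa : P a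
      · obtain ⟨g, hPg, hge, hga⟩ := meet e a hPe hPa
        refine ⟨g, hPg, ?_⟩
        intro f hf hPf
        rcases Finset.mem_insert.mp hf with rfl | hf
        · exact hga
        · exact leJ_trans hge (he f hf hPf)
      · refine ⟨e, hPe, ?_⟩
        intro f hf hPf
        rcases Finset.mem_insert.mp hf with rfl | hf
        · exact absurd hPf hPa
        · exact he f hf hPf
  obtain ⟨e, hPe, he⟩ := key Finset.univ
  exact ⟨e, hPe, fun f hPf => he f (Finset.mem_univ f) hPf⟩

lemma rfix_exists [Fintype M] (hJ : JTrivial M) (x : M) :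
    ∃ e : M, (IsIdempotentElem e ∧ x * e = x) ∧
      ∀ f : M, IsIdempotentElem f → x * f = x → leJ e f := by
  have := exists_min hJ (fun e => IsIdempotentElem e ∧ x * e = x)
    ⟨by simp [IsIdempotentElem], by simp⟩ ?_
  · obtain ⟨e, ⟨h1, h2⟩, h3⟩ := this
    exact ⟨e, ⟨h1, h2⟩, fun f hf hxf => h3 f ⟨hf, hxf⟩⟩
  · rintro e f ⟨he, hxe⟩ ⟨hf, hxf⟩
    obtain ⟨n, hn, hidem⟩ := exists_idem_pow (e * f)
    obtain ⟨k, rfl⟩ : ∃ k, n = k + 1 := ⟨n - 1, by omega⟩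
    refine ⟨(e * f) ^ (k + 1), ⟨hidem, ?_⟩, ?_, ?_⟩
    · induction (k + 1) with
      | zero => simp
      | succ m ih =>
        rw [pow_succ, ← mul_assoc, ih, ← mul_assoc, hxe, hxf]
    · refine ⟨1, f * (e * f) ^ k, ?_⟩
      rw [one_mul, pow_succ', mul_assoc]
    · refine ⟨(e * f) ^ k * e, 1, ?_⟩
      rw [mul_one, pow_succ, mul_assoc]

lemma lfix_exists [Fintype M] (hJ : JTrivial M) (x : M) :
    ∃ e : M, (IsIdempotentElem e ∧ e * x = x) ∧
      ∀ f : M, IsIdempotentElem f → f * x = x → leJ e f := by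
  have := exists_min hJ (fun e => IsIdempotentElem e ∧ e * x = x)
    ⟨by simp [IsIdempotentElem], by simp⟩ ?_
  · obtain ⟨e, ⟨h1, h2⟩, h3⟩ := this
    exact ⟨e, ⟨h1, h2⟩, fun f hf hxf => h3 f ⟨hf, hxf⟩⟩
  · rintro e f ⟨he, hxe⟩ ⟨hf, hxf⟩
    obtain ⟨n, hn, hidem⟩ := exists_idem_pow (e * f)
    obtain ⟨k, rfl⟩ : ∃ k, n = k + 1 := ⟨n - 1, by omega⟩
    refine ⟨(e * f) ^ (k + 1), ⟨hidem, ?_⟩, ?_, ?_⟩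
    · induction (k + 1) with
      | zero => simp
      | succ m ih =>
        have hstep : (e * f) ^ (m + 1) * x = (e * f) * ((e * f) ^ m * x) := by
          rw [pow_succ', mul_assoc]
        rw [hstep, ih, mul_assoc, hxf, hxe]
    · refine ⟨1, f * (e * f) ^ k, ?_⟩
      rw [one_mul, pow_succ', mul_assoc]
    · refine ⟨(e * f) ^ k * e, 1, ?_⟩
      rw [mul_one, pow_succ, mul_assoc]

end Aux


section Spec
variable {M : Type*} [Monoid M]

lemma omegaPow_spec [Fintype M] (x : M) :
    IsIdempotentElem (omegaPow x) ∧ ∃ n : ℕ, 0 < n ∧ omegaPow x = x ^ n := by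
  have h : ∃ e : M, IsIdempotentElem e ∧ ∃ n : ℕ, 0 < n ∧ e = x ^ n := by
    obtain ⟨n, hn, hi⟩ := exists_idem_pow x
    exact ⟨x ^ n, hi, n, hn, rfl⟩
  rw [omegaPow, dif_pos h]
  exact h.choose_spec

lemma rfixF_spec [Fintype M] (hJ : JTrivial M) (x : M) :
    (IsIdempotentElem (rfixF x) ∧ x * rfixF x = x) ∧
      ∀ f : M, IsIdempotentElem f → x * f = x → leJ (rfixF x) f := by
  have h := rfix_exists hJ x
  rw [rfixF, dif_pos h]
  exact h.choose_spec

lemma lfixF_spec [Fintype M] (hJ : JTrivial M) (x : M) :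
    (IsIdempotentElem (lfixF x) ∧ lfixF x * x = x) ∧
      ∀ f : M, IsIdempotentElem f → f * x = x → leJ (lfixF x) f := by
  have h := lfix_exists hJ x
  rw [lfixF, dif_pos h]
  exact h.choose_spec

end Spec

/-- If `x = u * v` is a non-trivial factorization in a finite `J`-trivial monoid `M`, then in
`K[M]` one has `(u - u^ω)(v - v^ω) = x + Σ_{y <_J x} c_y y`, i.e. the difference between
`(u - u^ω)(v - v^ω)` and `x` lies in the span of the elements strictly `J`-below `x`. -/
theorem nontrivial_factorization_radical_square (K : Type*) [Field K] {M : Type*}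
    [Monoid M] [Fintype M] (hJ : JTrivial M) (x u v : M)
    (hx : x = u * v)
    (hu : lfixF x * u ≠ lfixF x) (hv : v * rfixF x ≠ rfixF x) :
    (MonoidAlgebra.of K M u - MonoidAlgebra.of K M (omegaPow u))
      * (MonoidAlgebra.of K M v - MonoidAlgebra.of K M (omegaPow v))
      - MonoidAlgebra.of K M x
    ∈ Submodule.span K
        ((fun z : M => (MonoidAlgebra.of K M z : MonoidAlgebra K M)) ''
          {y : M | leJ y x ∧ y ≠ x}) := by
  set O : M →* MonoidAlgebra K M := MonoidAlgebra.of K M with hO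
  obtain ⟨huI, m, hm, hmu⟩ := omegaPow_spec u
  obtain ⟨hvI, n, hn, hnv⟩ := omegaPow_spec v
  obtain ⟨m', rfl⟩ : ∃ m', m = m' + 1 := ⟨m - 1, by omega⟩
  obtain ⟨n', rfl⟩ : ∃ n', n = n' + 1 := ⟨n - 1, by omega⟩
  set u' := omegaPow u
  set v' := omegaPow v
  -- v * v' = v', v' * v = v', u * u' = u', u' * u = u'
  have habsv := pow_absorb hJ v hn (hnv ▸ hvI)
  have hvv' : v * v' = v' := by rw [hnv]; exact habsv.1
  have habsu := pow_absorb hJ u hm (hmu ▸ huI)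
  have hu'u : u' * u = u' := by rw [hmu]; exact habsu.2
  -- strictness helpers
  have hrv : x * v' = x → False := by
    intro hxv
    have hle : leJ (rfixF x) v' := (rfixF_spec hJ x).2 v' hvI hxv
    have habs := idem_absorb hJ ((rfixF_spec hJ x).1.1) hvI hle
    apply hv
    calc v * rfixF x = v * (v' * rfixF x) := by rw [habs.1]
    _ = (v * v') * rfixF x := by rw [mul_assoc]
    _ = v' * rfixF x := by rw [hvv']
    _ = rfixF x := habs.1
  have hlu : u' * x = x → False := by
    intro hxu
    have hle : leJ (lfixF x) u' := (lfixF_spec hJ x).2 u' huI hxu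
    have habs := idem_absorb hJ ((lfixF_spec hJ x).1.1) huI hle
    apply hu
    calc lfixF x * u = (lfixF x * u') * u := by rw [habs.2]
    _ = lfixF x * (u' * u) := by rw [mul_assoc]
    _ = lfixF x * u' := by rw [hu'u]
    _ = lfixF x := habs.2
  -- memberships
  have mem1 : u * v' ∈ {y : M | leJ y x ∧ y ≠ x} := by
    constructor
    · refine ⟨1, v ^ n', ?_⟩
      rw [one_mul, hx, hnv, pow_succ']
      simp [mul_assoc]
    · intro hEq
      apply hrv
      calc x * v' = (u * v') * v' := by rw [hEq]
      _ = u * (v' * v') := mul_assoc _ _ _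
      _ = u * v' := by rw [hvI]
      _ = x := hEq
  have mem2 : u' * v ∈ {y : M | leJ y x ∧ y ≠ x} := by
    constructor
    · refine ⟨u ^ m', 1, ?_⟩
      rw [mul_one, hx, hmu, pow_succ]
      simp [mul_assoc]
    · intro hEq
      apply hlu
      calc u' * x = u' * (u' * v) := by rw [hEq]
      _ = (u' * u') * v := (mul_assoc _ _ _).symm
      _ = u' * v := by rw [huI]
      _ = x := hEq
  have mem3 : u' * v' ∈ {y : M | leJ y x ∧ y ≠ x} := by
    constructor
    · refine ⟨u ^ m', v ^ n', ?_⟩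
      rw [hx, hmu, hnv, pow_succ, pow_succ']
      simp [mul_assoc]
    · intro hEq
      apply hrv
      calc x * v' = (u' * v') * v' := by rw [hEq]
      _ = u' * (v' * v') := mul_assoc _ _ _
      _ = u' * v' := by rw [hvI]
      _ = x := hEq
  -- algebra
  have expand : (O u - O u') * (O v - O v') - O x
      = O (u' * v') - O (u * v') - O (u' * v) := by
    have h1 : O u * O v = O x := by rw [← map_mul, ← hx]
    rw [map_mul, map_mul, map_mul, sub_mul, mul_sub, mul_sub, h1]
    abel
  rw [expand]
  have hspan : ∀ y ∈ {y : M | leJ y x ∧ y ≠ x},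
      (O y : MonoidAlgebra K M) ∈ Submodule.span K
        ((fun z : M => (MonoidAlgebra.of K M z : MonoidAlgebra K M)) ''
          {y : M | leJ y x ∧ y ≠ x}) := by
    intro y hy
    exact Submodule.subset_span ⟨y, hy, rfl⟩
  exact Submodule.sub_mem _ (Submodule.sub_mem _ (hspan _ mem3) (hspan _ mem1)) (hspan _ mem2)
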